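/- Memory-limited necessary condition (discrete ML-POSC Pontryagin principle): consider the discrete-time setting where the state is a pair $s = (x,z) \in X \times Z$ (finite sets) and controls depend only on the memory coordinate: $u_t : Z \to U$. If $u^*$ is optimal among memory-feedback controls, then for every $t$ and every $z$ with $p^*_t(z) := \sum_x p^*_t(x,z) > 0$, $u^*_t(z)$ minimizes $u \mapsto \sum_x p^*_t(x\mid z)\,\mathcal{H}(t,(x,z),u,w^*_{t+dt})$, where $p^*_t(x\mid z) = p^*_t(x,z)/p^*_t(z)$, and $p^*$, $w^*$ are the forward distribution and backward value function of $u^*$. -/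

import Mathlib

open Finset

/-- Forward distribution on the extended state space `X × Z` under
memory-feedback controls `u : ℕ → Z → U`. -/
def pFm {X Z U : Type} [Fintype X] [Fintype Z] (P : U → X × Z → X × Z → ℝ)
    (p0 : X × Z → ℝ) (u : ℕ → Z → U) : ℕ → X × Z → ℝ
  | 0 => p0
  | (t+1) => fun s' => ∑ s : X × Z, pFm P p0 u t s * P (u t s.2) s s'

/-- Backward value function under memory-feedback controls, indexed by the
number `k` of remaining steps. -/
def wmAux {X Z U : Type} [Fintype X] [Fintype Z] (P : U → X × Z → X × Z → ℝ)
    (f : ℕ → X × Z → U → ℝ) (g : X × Z → ℝ) (N : ℕ) (u : ℕ → Z → U) :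
    ℕ → X × Z → ℝ
  | 0 => g
  | (k+1) => fun s =>
      f (N - (k+1)) s (u (N - (k+1)) s.2)
        + ∑ s' : X × Z, P (u (N - (k+1)) s.2) s s' * wmAux P f g N u k s'

/-- Backward value function at time `t`, with `w_N = g`. -/
def wmVal {X Z U : Type} [Fintype X] [Fintype Z] (P : U → X × Z → X × Z → ℝ)
    (f : ℕ → X × Z → U → ℝ) (g : X × Z → ℝ) (N : ℕ) (u : ℕ → Z → U) (t : ℕ) :
    X × Z → ℝ :=
  wmAux P f g N u (N - t)

/-- Total expected cost under memory-feedback controls. -/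
def Jm {X Z U : Type} [Fintype X] [Fintype Z] (P : U → X × Z → X × Z → ℝ)
    (p0 : X × Z → ℝ) (f : ℕ → X × Z → U → ℝ) (g : X × Z → ℝ) (N : ℕ)
    (u : ℕ → Z → U) : ℝ :=
  (∑ t ∈ Finset.range N, ∑ s : X × Z, pFm P p0 u t s * f t s (u t s.2))
    + ∑ s : X × Z, pFm P p0 u N s * g s

/-- Discrete Hamiltonian `H(t,s,u,w) = f(t,s,u) + ∑ s' P_u(s,s') w(s') - w(s)`. -/
def Hm {X Z U : Type} [Fintype X] [Fintype Z] (P : U → X × Z → X × Z → ℝ)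
    (f : ℕ → X × Z → U → ℝ) (t : ℕ) (s : X × Z) (v : U) (w : X × Z → ℝ) : ℝ :=
  f t s v + (∑ s' : X × Z, P v s s' * w s') - w s

lemma pFm_congr {X Z U : Type} [Fintype X] [Fintype Z] (P : U → X × Z → X × Z → ℝ)
    (p0 : X × Z → ℝ) (u u' : ℕ → Z → U) (t : ℕ)
    (h : ∀ r < t, u r = u' r) : pFm P p0 u t = pFm P p0 u' t := by
  induction t with
  | zero => rfl
  | succ t ih =>
    have h1 := ih (fun r hr => h r (Nat.lt_succ_of_lt hr))
    have h2 := h t (Nat.lt_succ_self t)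
    funext s'
    simp only [pFm, h1, h2]

lemma wmAux_congr {X Z U : Type} [Fintype X] [Fintype Z] (P : U → X × Z → X × Z → ℝ)
    (f : ℕ → X × Z → U → ℝ) (g : X × Z → ℝ) (N : ℕ) (u u' : ℕ → Z → U) (k : ℕ)
    (h : ∀ r, N - k ≤ r → u r = u' r) : wmAux P f g N u k = wmAux P f g N u' k := by
  induction k with
  | zero => rfl
  | succ k ih =>
    have h1 := ih (fun r hr => h r (le_trans (by omega) hr))
    have h2 := h (N - (k+1)) le_rfl
    funext s
    simp only [wmAux, h1, h2]

lemma wmVal_succ {X Z U : Type} [Fintype X] [Fintype Z] (P : U → X × Z → X × Z → ℝ)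
    (f : ℕ → X × Z → U → ℝ) (g : X × Z → ℝ) (N : ℕ) (u : ℕ → Z → U) (t : ℕ)
    (ht : t < N) :
    wmVal P f g N u t = fun s => f t s (u t s.2)
      + ∑ s' : X × Z, P (u t s.2) s s' * wmVal P f g N u (t+1) s' := by
  have h1 : N - t = (N - (t+1)) + 1 := by omega
  have h2 : N - (N - (t+1) + 1) = t := by omega
  rw [wmVal, h1]
  funext s
  simp only [wmAux, h2, wmVal]

lemma Jm_decomp {X Z U : Type} [Fintype X] [Fintype Z] (P : U → X × Z → X × Z → ℝ)
    (p0 : X × Z → ℝ) (f : ℕ → X × Z → U → ℝ) (g : X × Z → ℝ) (N : ℕ)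
    (u : ℕ → Z → U) : ∀ k t, t + k = N →
    Jm P p0 f g N u =
      (∑ r ∈ Finset.range t, ∑ s : X × Z, pFm P p0 u r s * f r s (u r s.2))
        + ∑ s : X × Z, pFm P p0 u t s * wmVal P f g N u t s := by
  intro k
  induction k with
  | zero =>
    intro t ht
    have : t = N := by omega
    subst this
    simp [Jm, wmVal, Nat.sub_self, wmAux]
  | succ k ih =>
    intro t ht
    have htN : t < N := by omega
    rw [ih (t+1) (by omega), Finset.sum_range_succ]
    have key : ∑ s : X × Z, pFm P p0 u t s * wmVal P f g N u t s
        = (∑ s : X × Z, pFm P p0 u t s * f t s (u t s.2))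
          + ∑ s' : X × Z, pFm P p0 u (t+1) s' * wmVal P f g N u (t+1) s' := by
      rw [wmVal_succ P f g N u t htN]
      have : ∀ s' : X × Z, pFm P p0 u (t+1) s' * wmVal P f g N u (t+1) s'
          = ∑ s : X × Z, pFm P p0 u t s * (P (u t s.2) s s' * wmVal P f g N u (t+1) s') := by
        intro s'
        simp only [pFm, Finset.sum_mul, mul_assoc]
      rw [Finset.sum_congr rfl (fun s' _ => this s'), Finset.sum_comm,
        ← Finset.sum_add_distrib]
      refine Finset.sum_congr rfl fun s _ => ?_
      rw [mul_add, Finset.mul_sum]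
    rw [key]; ring

theorem discrete_ML_POSC_pontryagin_necessary_condition
    {X Z U : Type} [Fintype X] [Fintype Z]
    (P : U → X × Z → X × Z → ℝ)
    (hPnonneg : ∀ u s s', 0 ≤ P u s s')
    (hPsum : ∀ u s, ∑ s' : X × Z, P u s s' = 1)
    (p0 : X × Z → ℝ) (hp0nonneg : ∀ s, 0 ≤ p0 s)
    (hp0sum : ∑ s : X × Z, p0 s = 1)
    (f : ℕ → X × Z → U → ℝ) (g : X × Z → ℝ) (N : ℕ)
    (uStar : ℕ → Z → U)
    -- optimality among all memory-feedback controls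
    (hopt : ∀ u : ℕ → Z → U, Jm P p0 f g N uStar ≤ Jm P p0 f g N u) :
    ∀ t < N, ∀ z : Z, 0 < (∑ x : X, pFm P p0 uStar t (x, z)) →
      ∀ v : U,
        (∑ x : X, (pFm P p0 uStar t (x, z) / ∑ x' : X, pFm P p0 uStar t (x', z)) *
          Hm P f t (x, z) (uStar t z) (wmVal P f g N uStar (t+1)))
        ≤ ∑ x : X, (pFm P p0 uStar t (x, z) / ∑ x' : X, pFm P p0 uStar t (x', z)) *
          Hm P f t (x, z) v (wmVal P f g N uStar (t+1)) := by
  intro t htN z hz v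
  classical
  set u' : ℕ → Z → U := fun r z' => if r = t ∧ z' = z then v else uStar r z' with hu'
  have hu'ne : ∀ r, r ≠ t → u' r = uStar r := by
    intro r hr; funext z'; simp [hu', hr]
  have hu'z : ∀ z', z' ≠ z → u' t z' = uStar t z' := by
    intro z' hzz; simp [hu', hzz]
  have hu'tz : u' t z = v := by simp [hu']
  -- same forward distributions up to time t
  have hpEq : ∀ r ≤ t, pFm P p0 u' r = pFm P p0 uStar r := by
    intro r hr
    exact pFm_congr P p0 u' uStar r (fun r' hr' => hu'ne r' (by omega))
  -- same value function from time t+1 on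
  have hwEq : wmVal P f g N u' (t+1) = wmVal P f g N uStar (t+1) := by
    unfold wmVal
    exact wmAux_congr P f g N u' uStar (N - (t+1))
      (fun r hr => hu'ne r (by omega))
  -- decompose both costs at time t
  have hd1 := Jm_decomp P p0 f g N uStar (N - t) t (by omega)
  have hd2 := Jm_decomp P p0 f g N u' (N - t) t (by omega)
  have hpre : (∑ r ∈ Finset.range t, ∑ s : X × Z, pFm P p0 u' r s * f r s (u' r s.2))
      = ∑ r ∈ Finset.range t, ∑ s : X × Z, pFm P p0 uStar r s * f r s (uStar r s.2) := by
    refine Finset.sum_congr rfl fun r hr => ?_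
    rw [Finset.mem_range] at hr
    rw [hpEq r hr.le, hu'ne r (by omega)]
  have hopt' := hopt u'
  rw [hd1, hd2, hpre, add_le_add_iff_left,
    wmVal_succ P f g N uStar t htN, wmVal_succ P f g N u' t htN,
    hpEq t le_rfl, hwEq] at hopt'
  -- hopt' : ∑ s p* (f uStar + ∑ P uStar w*) ≤ ∑ s p* (f u' + ∑ P u' w*)
  set w : X × Z → ℝ := wmVal P f g N uStar (t+1) with hw
  set p : X × Z → ℝ := pFm P p0 uStar t with hp
  set A : Z → ℝ := fun z' => ∑ x : X, p (x, z') *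
      (f t (x, z') (uStar t z') + ∑ s' : X × Z, P (uStar t z') (x, z') s' * w s') with hA
  set B : Z → ℝ := fun z' => ∑ x : X, p (x, z') *
      (f t (x, z') (u' t z') + ∑ s' : X × Z, P (u' t z') (x, z') s' * w s') with hB
  have hAB : A z ≤ B z := by
    have hsum : ∑ z' : Z, A z' ≤ ∑ z' : Z, B z' := by
      calc ∑ z' : Z, A z'
          = ∑ s : X × Z, p s * (f t s (uStar t s.2)
              + ∑ s' : X × Z, P (uStar t s.2) s s' * w s') := by
            rw [Fintype.sum_prod_type_right]
        _ ≤ ∑ s : X × Z, p s * (f t s (u' t s.2)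
              + ∑ s' : X × Z, P (u' t s.2) s s' * w s') := hopt'
        _ = ∑ z' : Z, B z' := by rw [Fintype.sum_prod_type_right]
    have hErase : ∑ z' ∈ Finset.univ.erase z, A z'
        = ∑ z' ∈ Finset.univ.erase z, B z' := by
      refine Finset.sum_congr rfl fun z' hz' => ?_
      rw [Finset.mem_erase] at hz'
      simp only [hA, hB, hu'z z' hz'.1]
    have h1 := Finset.sum_erase_add Finset.univ A (Finset.mem_univ z)
    have h2 := Finset.sum_erase_add Finset.univ B (Finset.mem_univ z)
    rw [← h1, ← h2, hErase] at hsum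
    linarith
  -- go from A z ≤ B z to the Hamiltonian inequality
  have hH : (∑ x : X, p (x, z) * Hm P f t (x, z) (uStar t z) w)
      ≤ ∑ x : X, p (x, z) * Hm P f t (x, z) v w := by
    have eA : (∑ x : X, p (x, z) * Hm P f t (x, z) (uStar t z) w)
        = A z - ∑ x : X, p (x, z) * w (x, z) := by
      rw [hA, ← Finset.sum_sub_distrib]
      refine Finset.sum_congr rfl fun x _ => ?_
      simp only [Hm]; ring
    have eB : (∑ x : X, p (x, z) * Hm P f t (x, z) v w)
        = B z - ∑ x : X, p (x, z) * w (x, z) := by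
      simp only [hB]
      rw [hu'tz, ← Finset.sum_sub_distrib]
      refine Finset.sum_congr rfl fun x _ => ?_
      simp only [Hm]; ring
    rw [eA, eB]
    linarith
  -- divide by the positive marginal
  have hc : 0 < ∑ x' : X, p (x', z) := hz
  have hgoal : ∀ (c : ℝ) (H : X → ℝ), (∑ x : X, (p (x, z) / c) * H x)
      = (∑ x : X, p (x, z) * H x) / c := by
    intro c H
    rw [Finset.sum_div]
    exact Finset.sum_congr rfl fun x _ => by rw [div_mul_eq_mul_div]
  rw [hgoal, hgoal]
  exact div_le_div_of_nonneg_right hH hc.le
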